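/- Let ρ be a positive integer, r an integer, and set s = ρ+r. In ℚ[[v]] let u be the unique power series with constant term 1 satisfying u^{ρ²} = (1+v)^{r²−ρ²}, and set w(v) = v·u. In ℚ[[t]] set v(t) = t·(1−(r/ρ)t)^{−1}, a = 1+(1−s/ρ)t, b = 1+(2−s/ρ)t, and c = 1+(1−s/ρ)(2−s/ρ)t. Let F ∈ ℚ[[w]] be the unique power series with F(w(v)) = (1+v)^{r²}·(1+(r²/ρ²)v)^{−ρ²} in ℚ[[v]]. Then F(w(v(t))) = a^{ρ²−r²}·b^{r²}·c^{−ρ²} as elements of ℚ[[t]]. -/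

import Mathlib

open PowerSeries

/-- Composition (substitution) `f(g)` of formal power series, correct whenever the
constant term of `g` vanishes. -/
noncomputable def comp (f g : ℚ⟦X⟧) : ℚ⟦X⟧ :=
  PowerSeries.mk fun n => ∑ k ∈ Finset.range (n + 1), coeff k f * coeff n (g ^ k)

/-- Integer power of a formal power series (using the formal inverse for negative
exponents). -/
noncomputable def zp (f : ℚ⟦X⟧) (n : ℤ) : ℚ⟦X⟧ :=
  f ^ n.toNat * f⁻¹ ^ (-n).toNat

lemma coeff_comp (f g : ℚ⟦X⟧) (n : ℕ) :
    coeff n (comp f g) = ∑ k ∈ Finset.range (n + 1), coeff k f * coeff n (g ^ k) := by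
  simp [comp]

lemma coeff_pow_zero {g : ℚ⟦X⟧} (hg : constantCoeff g = 0) {n k : ℕ} (h : n < k) :
    coeff n (g ^ k) = 0 := by
  obtain ⟨h', rfl⟩ := PowerSeries.X_dvd_iff.mpr hg
  rw [mul_pow, PowerSeries.coeff_mul]
  apply Finset.sum_eq_zero
  rintro ⟨i, j⟩ hij
  have hi : i ≤ n := Finset.HasAntidiagonal.antidiagonal.fst_le hij
  rw [PowerSeries.coeff_X_pow, if_neg (by omega), zero_mul]

lemma coeff_eval₂ {g : ℚ⟦X⟧} (hg : constantCoeff g = 0) (P : Polynomial ℚ) (n : ℕ) :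
    coeff n (Polynomial.eval₂ C g P)
      = ∑ k ∈ Finset.range (n + 1), P.coeff k * coeff n (g ^ k) := by
  rw [Polynomial.eval₂_eq_sum_range, map_sum]
  set N := max (P.natDegree + 1) (n + 1) with hN
  have h1 : ∑ i ∈ Finset.range (P.natDegree + 1), coeff n (C (P.coeff i) * g ^ i)
      = ∑ i ∈ Finset.range N, P.coeff i * coeff n (g ^ i) := by
    rw [Finset.sum_subset (Finset.range_subset_range.mpr (le_max_left _ _))]
    · exact Finset.sum_congr rfl fun i _ => by rw [coeff_C_mul]
    · intro i _ hi
      have hd : P.natDegree < i := by simp at hi; omega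
      simp [Polynomial.coeff_eq_zero_of_natDegree_lt hd]
  have h2 : ∑ k ∈ Finset.range (n + 1), P.coeff k * coeff n (g ^ k)
      = ∑ k ∈ Finset.range N, P.coeff k * coeff n (g ^ k) := by
    rw [Finset.sum_subset (Finset.range_subset_range.mpr (le_max_right _ _))]
    intro i _ hi
    rw [coeff_pow_zero hg (by simp at hi ⊢; omega), mul_zero]
  rw [h1, h2]

lemma coeff_comp_eq_eval₂ {f g : ℚ⟦X⟧} (hg : constantCoeff g = 0) {n : ℕ}
    {P : Polynomial ℚ} (hP : ∀ k ≤ n, P.coeff k = coeff k f) :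
    coeff n (comp f g) = coeff n (Polynomial.eval₂ C g P) := by
  rw [coeff_eval₂ hg, coeff_comp]
  exact Finset.sum_congr rfl fun k hk => by
    rw [hP k (by simpa [Nat.lt_succ_iff] using hk)]

lemma trunc_coeff_eq {f : ℚ⟦X⟧} {m k : ℕ} (hk : k < m) :
    (trunc m f).coeff k = coeff k f := by
  rw [coeff_trunc, if_pos hk]

lemma comp_add (f f' g : ℚ⟦X⟧) : comp (f + f') g = comp f g + comp f' g := by
  ext n
  simp [coeff_comp, add_mul, Finset.sum_add_distrib]

lemma comp_C (q : ℚ) (g : ℚ⟦X⟧) : comp (C q) g = C q := by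
  ext n
  rw [coeff_comp, Finset.sum_eq_single 0
    (fun k _ hk => by rw [PowerSeries.coeff_C, if_neg hk, zero_mul])
    (fun h => absurd (Finset.mem_range.mpr (by omega)) h)]
  by_cases hn : n = 0 <;> simp [hn, PowerSeries.coeff_C, PowerSeries.coeff_one]

lemma comp_one (g : ℚ⟦X⟧) : comp 1 g = 1 := by
  simpa using comp_C 1 g

lemma comp_X {g : ℚ⟦X⟧} (hg : constantCoeff g = 0) : comp X g = g := by
  ext n
  rw [coeff_comp]
  cases n with
  | zero => simp [coeff_zero_eq_constantCoeff, hg]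
  | succ m =>
    rw [Finset.sum_eq_single 1
      (fun k _ hk => by rw [PowerSeries.coeff_X, if_neg hk, zero_mul])
      (fun h => absurd (Finset.mem_range.mpr (by omega)) h)]
    simp

lemma comp_mul {g : ℚ⟦X⟧} (hg : constantCoeff g = 0) (f f' : ℚ⟦X⟧) :
    comp (f * f') g = comp f g * comp f' g := by
  ext n
  have key : ∀ k ≤ n, (trunc (n+1) f * trunc (n+1) f').coeff k = coeff k (f * f') := by
    intro k hk
    rw [Polynomial.coeff_mul, PowerSeries.coeff_mul]
    refine Finset.sum_congr rfl fun p hp => ?_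
    have h1 : p.1 ≤ k := Finset.HasAntidiagonal.antidiagonal.fst_le hp
    have h2 : p.2 ≤ k := Finset.HasAntidiagonal.antidiagonal.snd_le hp
    rw [trunc_coeff_eq (by omega), trunc_coeff_eq (by omega)]
  rw [coeff_comp_eq_eval₂ hg (P := trunc (n+1) f * trunc (n+1) f') key,
    PowerSeries.coeff_mul, Polynomial.eval₂_mul]
  rw [show ∑ p ∈ Finset.HasAntidiagonal.antidiagonal n, coeff p.1 (comp f g) * coeff p.2 (comp f' g)
      = ∑ p ∈ Finset.HasAntidiagonal.antidiagonal n,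
          coeff p.1 (Polynomial.eval₂ C g (trunc (n+1) f))
            * coeff p.2 (Polynomial.eval₂ C g (trunc (n+1) f')) from
    Finset.sum_congr rfl fun p hp => by
      have h1 : p.1 ≤ n := Finset.HasAntidiagonal.antidiagonal.fst_le hp
      have h2 : p.2 ≤ n := Finset.HasAntidiagonal.antidiagonal.snd_le hp
      rw [coeff_comp_eq_eval₂ hg (P := trunc (n+1) f) (fun k hk => trunc_coeff_eq (by omega)),
        coeff_comp_eq_eval₂ hg (P := trunc (n+1) f') (fun k hk => trunc_coeff_eq (by omega))]]
  rw [← PowerSeries.coeff_mul]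

noncomputable def compHom (g : ℚ⟦X⟧) (hg : constantCoeff g = 0) : ℚ⟦X⟧ →+* ℚ⟦X⟧ where
  toFun f := comp f g
  map_one' := comp_one g
  map_mul' f f' := comp_mul hg f f'
  map_zero' := by ext n; simp [coeff_comp]
  map_add' f f' := comp_add f f' g

lemma constantCoeff_comp (f g : ℚ⟦X⟧) : constantCoeff (comp f g) = constantCoeff f := by
  rw [← coeff_zero_eq_constantCoeff, coeff_comp]
  simp

lemma coeff_comp_congr {A B h : ℚ⟦X⟧} {n : ℕ} (hAB : ∀ k ≤ n, coeff k A = coeff k B) :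
    coeff n (comp A h) = coeff n (comp B h) := by
  rw [coeff_comp, coeff_comp]
  exact Finset.sum_congr rfl fun k hk => by
    rw [hAB k (by simpa [Nat.lt_succ_iff] using hk)]

lemma comp_assoc (f : ℚ⟦X⟧) {g h : ℚ⟦X⟧} (hg : constantCoeff g = 0)
    (hh : constantCoeff h = 0) : comp f (comp g h) = comp (comp f g) h := by
  have hgh : constantCoeff (comp g h) = 0 := by rw [constantCoeff_comp]; exact hg
  ext n
  rw [coeff_comp_eq_eval₂ hgh (P := trunc (n+1) f) (fun k hk => trunc_coeff_eq (by omega))]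
  have hCC : (compHom h hh).comp C = C := Subsingleton.elim _ _
  have step : Polynomial.eval₂ C (comp g h) (trunc (n+1) f)
      = comp (Polynomial.eval₂ C g (trunc (n+1) f)) h := by
    calc Polynomial.eval₂ C (comp g h) (trunc (n+1) f)
        = Polynomial.eval₂ ((compHom h hh).comp C) ((compHom h hh) g) (trunc (n+1) f) := by
          rw [hCC]; rfl
      _ = (compHom h hh) (Polynomial.eval₂ C g (trunc (n+1) f)) :=
          (Polynomial.hom_eval₂ _ _ _ _).symm
      _ = comp (Polynomial.eval₂ C g (trunc (n+1) f)) h := rfl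
  rw [step]
  exact coeff_comp_congr (B := comp f g) (fun k hk =>
    (coeff_comp_eq_eval₂ hg (P := trunc (n+1) f) (fun j hj => trunc_coeff_eq (by omega))).symm)

lemma zp_units (v : ℚ⟦X⟧ˣ) (n : ℤ) :
    zp (v : ℚ⟦X⟧) n = ((v ^ n : ℚ⟦X⟧ˣ) : ℚ⟦X⟧) := by
  have h0 : constantCoeff (v : ℚ⟦X⟧) ≠ 0 := by
    have h := v.isUnit.map (constantCoeff)
    exact h.ne_zero
  have hv0 : (v : ℚ⟦X⟧) ≠ 0 := by
    intro h
    exact h0 (by rw [h]; simp)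
  have hinv : ((v : ℚ⟦X⟧))⁻¹ = ((v⁻¹ : ℚ⟦X⟧ˣ) : ℚ⟦X⟧) := by
    have h1 : (v : ℚ⟦X⟧) * (v : ℚ⟦X⟧)⁻¹ = 1 := PowerSeries.mul_inv_cancel _ h0
    have h2 : (v : ℚ⟦X⟧) * ((v⁻¹ : ℚ⟦X⟧ˣ) : ℚ⟦X⟧) = 1 := by
      rw [← Units.val_mul, mul_inv_cancel, Units.val_one]
    exact mul_left_cancel₀ hv0 (h1.trans h2.symm)
  cases n with
  | ofNat k => simp [zp, zpow_natCast]
  | negSucc k =>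
      have e1 : (Int.negSucc k).toNat = 0 := rfl
      have e2 : (-Int.negSucc k).toNat = k + 1 := rfl
      rw [zp, e1, e2, pow_zero, one_mul, zpow_negSucc, hinv, ← inv_pow, Units.val_pow_eq_pow_val]

noncomputable def mkU (f : ℚ⟦X⟧) (h : constantCoeff f ≠ 0) : ℚ⟦X⟧ˣ :=
  ⟨f, f⁻¹, PowerSeries.mul_inv_cancel f h, PowerSeries.inv_mul_cancel f h⟩

lemma zp_mkU (f : ℚ⟦X⟧) (h : constantCoeff f ≠ 0) (n : ℤ) :
    zp f n = ((mkU f h ^ n : ℚ⟦X⟧ˣ) : ℚ⟦X⟧) := zp_units (mkU f h) n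

lemma comp_zp {g : ℚ⟦X⟧} (hg : constantCoeff g = 0) (v : ℚ⟦X⟧ˣ) (n : ℤ) :
    comp (zp (v : ℚ⟦X⟧) n) g
      = ((Units.map (compHom g hg).toMonoidHom v ^ n : ℚ⟦X⟧ˣ) : ℚ⟦X⟧) := by
  rw [zp_units, ← map_zpow]
  rfl

/-- Rank-ρ virtual Segre–Verlinde correspondence for `F = f_{r/ρ}^{ρ²}`:
`F(w(v(t))) = a^{ρ²-r²}·b^{r²}·c^{-ρ²}` with `a = 1+(1-s/ρ)t`, `b = 1+(2-s/ρ)t`,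
`c = 1+(1-s/ρ)(2-s/ρ)t`, under the variable changes `w = v(1+v)^{r²/ρ²-1}`,
`v = t(1-(r/ρ)t)⁻¹`, `s = ρ+r`. -/
theorem virtual_segre_verlinde_f (ρ : ℕ) (hρ : 0 < ρ) (r s : ℤ) (hs : s = ρ + r)
    (u vt a b c : ℚ⟦X⟧)
    (hu0 : constantCoeff u = 1)
    (hu : u ^ (ρ ^ 2) = zp (1 + X) (r ^ 2 - (ρ : ℤ) ^ 2))
    (hvt : vt = X * (1 - C ((r : ℚ) / (ρ : ℚ)) * X)⁻¹)
    (ha : a = 1 + C (1 - (s : ℚ) / (ρ : ℚ)) * X)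
    (hb : b = 1 + C (2 - (s : ℚ) / (ρ : ℚ)) * X)
    (hc : c = 1 + C ((1 - (s : ℚ) / (ρ : ℚ)) * (2 - (s : ℚ) / (ρ : ℚ))) * X)
    (F : ℚ⟦X⟧)
    (hF : comp F (X * u) =
      zp (1 + X) (r ^ 2) * zp (1 + C ((r : ℚ) ^ 2 / (ρ : ℚ) ^ 2) * X) (-(ρ : ℤ) ^ 2)) :
    comp F (comp (X * u) vt) =
      zp a ((ρ : ℤ) ^ 2 - r ^ 2) * zp b (r ^ 2) * zp c (-(ρ : ℤ) ^ 2) := by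
  have hρQ : (ρ : ℚ) ≠ 0 := Nat.cast_ne_zero.mpr hρ.ne'
  set q : ℚ := (r : ℚ) / (ρ : ℚ) with hq
  have hsρ : (s : ℚ) / (ρ : ℚ) = 1 + q := by
    rw [hs, hq]; push_cast; field_simp
  -- rewrite a, b, c
  have e1 : (1 - (s : ℚ) / (ρ : ℚ)) = -q := by rw [hsρ]; ring
  have e2 : (2 - (s : ℚ) / (ρ : ℚ)) = 1 - q := by rw [hsρ]; ring
  have e3 : (1 - (s : ℚ) / (ρ : ℚ)) * (2 - (s : ℚ) / (ρ : ℚ)) = q * q - q := by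
    rw [hsρ]; ring
  have e4 : (r : ℚ) ^ 2 / (ρ : ℚ) ^ 2 = q * q := by
    rw [hq, div_mul_div_comm, sq, sq]
  have ha' : a = 1 - C q * X := by rw [ha, e1, map_neg]; ring
  have hb' : b = 1 + C (1 - q) * X := by rw [hb, e2]
  have hc' : c = 1 + C (q * q - q) * X := by rw [hc, e3]
  -- constant coefficients
  have ha0 : constantCoeff a ≠ 0 := by rw [ha]; simp
  have hb0 : constantCoeff b ≠ 0 := by rw [hb]; simp
  have hc0 : constantCoeff c ≠ 0 := by rw [hc]; simp
  have h10 : constantCoeff (1 + X : ℚ⟦X⟧) ≠ 0 := by simp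
  have h20 : constantCoeff (1 + C (q * q) * X : ℚ⟦X⟧) ≠ 0 := by simp
  have hvt0 : constantCoeff vt = 0 := by rw [hvt]; simp
  have hg0 : constantCoeff (X * u) = 0 := by simp
  -- vt = X * a⁻¹
  have hvt' : vt = X * a⁻¹ := by rw [hvt, ha']
  -- algebraic identities
  have hab : b = a + X := by
    rw [hb', ha', map_sub, map_one]; ring
  have hac : c = a + C (q * q) * X := by
    rw [hc', ha', map_sub]; ring
  have hBA : b * a⁻¹ = 1 + vt := by
    rw [hab, add_mul, PowerSeries.mul_inv_cancel a ha0, hvt']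
  have hCA : c * a⁻¹ = 1 + C (q * q) * vt := by
    rw [hac, add_mul, PowerSeries.mul_inv_cancel a ha0, hvt', mul_assoc]
  -- units
  set uA := mkU a ha0 with huA
  set uB := mkU b hb0 with huB
  set uC := mkU c hc0 with huC
  set u1 := mkU (1 + X) h10 with hu1
  set u2 := mkU (1 + C (q * q) * X) h20 with hu2
  set φ := compHom vt hvt0 with hφ
  have h1 : comp (1 + X) vt = b * a⁻¹ := by
    rw [comp_add, comp_one, comp_X hvt0]; exact hBA.symm
  have h2 : comp (1 + C (q * q) * X) vt = c * a⁻¹ := by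
    rw [comp_add, comp_one, comp_mul hvt0, comp_C, comp_X hvt0]; exact hCA.symm
  have hmap1 : Units.map φ.toMonoidHom u1 = uB * uA⁻¹ := Units.ext h1
  have hmap2 : Units.map φ.toMonoidHom u2 = uC * uA⁻¹ := Units.ext h2
  have main : ((uB * uA⁻¹) ^ (r ^ 2) * (uC * uA⁻¹) ^ (-(ρ : ℤ) ^ 2) : ℚ⟦X⟧ˣ)
      = uA ^ ((ρ : ℤ) ^ 2 - r ^ 2) * uB ^ (r ^ 2) * uC ^ (-(ρ : ℤ) ^ 2) := by
    rw [mul_zpow, mul_zpow, zpow_sub, inv_zpow, inv_zpow, ← zpow_neg, ← zpow_neg]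
    simp only [neg_neg, mul_comm, mul_assoc, mul_left_comm]
  calc comp F (comp (X * u) vt)
      = comp (comp F (X * u)) vt := comp_assoc F hg0 hvt0
    _ = comp (zp (1 + X) (r ^ 2) * zp (1 + C (q * q) * X) (-(ρ : ℤ) ^ 2)) vt := by
        rw [hF, e4]
    _ = comp (zp (1 + X) (r ^ 2)) vt * comp (zp (1 + C (q * q) * X) (-(ρ : ℤ) ^ 2)) vt :=
        comp_mul hvt0 _ _
    _ = (((uB * uA⁻¹) ^ (r ^ 2) : ℚ⟦X⟧ˣ) : ℚ⟦X⟧)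
          * (((uC * uA⁻¹) ^ (-(ρ : ℤ) ^ 2) : ℚ⟦X⟧ˣ) : ℚ⟦X⟧) := by
        rw [show (1 + X : ℚ⟦X⟧) = (u1 : ℚ⟦X⟧) from rfl,
          show (1 + C (q * q) * X : ℚ⟦X⟧) = (u2 : ℚ⟦X⟧) from rfl,
          comp_zp hvt0 u1, comp_zp hvt0 u2, ← hφ, hmap1, hmap2]
    _ = (((uB * uA⁻¹) ^ (r ^ 2) * (uC * uA⁻¹) ^ (-(ρ : ℤ) ^ 2) : ℚ⟦X⟧ˣ) : ℚ⟦X⟧) :=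
        (Units.val_mul _ _).symm
    _ = ((uA ^ ((ρ : ℤ) ^ 2 - r ^ 2) * uB ^ (r ^ 2) * uC ^ (-(ρ : ℤ) ^ 2) : ℚ⟦X⟧ˣ) : ℚ⟦X⟧) := by
        rw [main]
    _ = zp a ((ρ : ℤ) ^ 2 - r ^ 2) * zp b (r ^ 2) * zp c (-(ρ : ℤ) ^ 2) := by
        rw [zp_mkU a ha0, zp_mkU b hb0, zp_mkU c hc0, Units.val_mul, Units.val_mul]
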